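/- For every k ≥ 1 and every even n ≥ 2, there exists a set E of n points in ℝ² such that the number of tuples (R₁,…,R_{k+1}) ∈ E^{k+1} with R_j · R_{j+1} = 0 for all 1 ≤ j ≤ k is at least (n/2)^{k+1}. -/

import Mathlib

/-- The standard dot product on ℝ². -/
def dot (A B : ℝ × ℝ) : ℝ := A.1 * B.1 + A.2 * B.2

theorem many_zero_chains_construction (k : ℕ) (hk : 1 ≤ k) (n : ℕ) (hn : 2 ≤ n)
    (heven : Even n) :
    ∃ E : Finset (ℝ × ℝ), E.card = n ∧
      (n / 2) ^ (k + 1) ≤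
        {R : Fin (k + 1) → ℝ × ℝ | (∀ i, R i ∈ E) ∧
          ∀ j : Fin k, dot (R j.castSucc) (R j.succ) = 0}.ncard := by
  obtain ⟨m, hm⟩ := heven
  have hm2 : n / 2 = m := by omega
  have hmpos : 1 ≤ m := by omega
  set px : Fin m → ℝ × ℝ := fun i => ((i : ℝ) + 1, 0) with hpx
  set py : Fin m → ℝ × ℝ := fun i => (0, (i : ℝ) + 1) with hpy
  have hpxinj : Function.Injective px := by
    intro a b h
    have : ((a : ℕ) : ℝ) = ((b : ℕ) : ℝ) := by
      have := congrArg Prod.fst h; simpa [px] using this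
    exact Fin.ext (Nat.cast_injective this)
  have hpyinj : Function.Injective py := by
    intro a b h
    have : ((a : ℕ) : ℝ) = ((b : ℕ) : ℝ) := by
      have := congrArg Prod.snd h; simpa [py] using this
    exact Fin.ext (Nat.cast_injective this)
  have hxpos : ∀ i : Fin m, (px i).1 > 0 := by
    intro i; simp [px]; positivity
  have hypos : ∀ i : Fin m, (py i).2 > 0 := by
    intro i; simp [py]; positivity
  refine ⟨(Finset.univ.image px) ∪ (Finset.univ.image py), ?_, ?_⟩
  · rw [Finset.card_union_of_disjoint, Finset.card_image_of_injective _ hpxinj,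
      Finset.card_image_of_injective _ hpyinj]
    · simp; omega
    · rw [Finset.disjoint_left]
      rintro a ha hb
      simp only [Finset.mem_image, Finset.mem_univ, true_and] at ha hb
      obtain ⟨i, rfl⟩ := ha
      obtain ⟨j, hj⟩ := hb
      have := congrArg Prod.fst hj
      simp [px, py] at this
      have h2 : ((i:ℕ):ℝ) + 1 > 0 := by positivity
      linarith
  · set S : Set (Fin (k+1) → ℝ × ℝ) :=
      {R : Fin (k + 1) → ℝ × ℝ | (∀ i, R i ∈ (Finset.univ.image px) ∪ (Finset.univ.image py)) ∧
          ∀ j : Fin k, dot (R j.castSucc) (R j.succ) = 0} with hS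
    set T : (Fin (k+1) → Fin m) → (Fin (k+1) → ℝ × ℝ) :=
      fun f i => if (i : ℕ) % 2 = 0 then px (f i) else py (f i) with hT
    have hTinj : Function.Injective T := by
      intro f g h
      funext i
      have hi := congrFun h i
      by_cases hp : (i : ℕ) % 2 = 0
      · simp only [hT, hp, if_true] at hi
        exact hpxinj hi
      · simp only [hT, hp, if_false] at hi
        exact hpyinj hi
    have hsub : Set.range T ⊆ S := by
      rintro _ ⟨f, rfl⟩
      constructor
      · intro i
        by_cases hp : (i : ℕ) % 2 = 0 <;>
          simp [hT, hp, Finset.mem_union, Finset.mem_image]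
      · intro j
        have hc : ((j.castSucc : Fin (k+1)) : ℕ) = (j : ℕ) := rfl
        have hs : ((j.succ : Fin (k+1)) : ℕ) = (j : ℕ) + 1 := rfl
        by_cases hp : (j : ℕ) % 2 = 0
        · have hp' : ((j : ℕ) + 1) % 2 ≠ 0 := by omega
          simp [hT, hc, hs, hp, hp', dot, px, py]
        · have hp' : ((j : ℕ) + 1) % 2 = 0 := by omega
          simp [hT, hc, hs, hp, hp', dot, px, py]
    have hfin : S.Finite := by
      have : S ⊆ Set.pi Set.univ (fun i : Fin (k+1) =>
          (((Finset.univ.image px) ∪ (Finset.univ.image py) : Finset (ℝ × ℝ)) : Set (ℝ × ℝ))) := by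
        intro R hR i _
        exact hR.1 i
      exact Set.Finite.subset (Set.Finite.pi (fun i => Finset.finite_toSet _)) this
    calc (n / 2) ^ (k + 1) = m ^ (k+1) := by rw [hm2]
      _ = (Set.range T).ncard := by
          rw [← Set.image_univ, Set.ncard_image_of_injective _ hTinj, Set.ncard_univ]
          simp [Nat.card_fun]
      _ ≤ S.ncard := Set.ncard_le_ncard hsub hfin
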